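/- Let ℓ be a prime and N, K, δ be positive integers. Let α, β : ℕ → ℤ be sequences and define λ : ℕ → ℤ by λ(k) = Σ_{i=0}^{k} α(i)·β(k−i). Suppose: (i) δK is the minimal period of α modulo ℓ^N, i.e., α(n+δK) ≡ α(n) (mod ℓ^N) for all n ≥ 0 and no smaller positive integer has this property; (ii) β(0) ≡ 1 (mod ℓ^N); and (iii) β(m) ≡ 0 (mod ℓ^N) whenever m is not divisible by δ. Fix positive integers s, t and integers a_1,…,a_s and b_1,…,b_t with 0 ≤ a_i ≤ δ−1 and 0 ≤ b_j ≤ δ−1. If Σ_{i=1}^{s} λ(δn+a_i) ≡ Σ_{j=1}^{t} λ(δn+b_j) (mod ℓ^N) holds for all integers n with 0 ≤ n < K, then it holds for all integers n ≥ 0. -/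

import Mathlib

theorem stmt0 (ℓ N K δ : ℕ) (hℓ : Nat.Prime ℓ) (hN : 0 < N) (hK : 0 < K) (hδ : 0 < δ)
    (α β lam : ℕ → ℤ)
    (hlam : ∀ k : ℕ, lam k = ∑ i ∈ Finset.range (k + 1), α i * β (k - i))
    (hper : ∀ n : ℕ, α (n + δ * K) ≡ α n [ZMOD ((ℓ : ℤ) ^ N)])
    (hmin : ∀ d : ℕ, 0 < d → (∀ n : ℕ, α (n + d) ≡ α n [ZMOD ((ℓ : ℤ) ^ N)]) → δ * K ≤ d)
    (hβ0 : β 0 ≡ 1 [ZMOD ((ℓ : ℤ) ^ N)])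
    (hβ : ∀ m : ℕ, ¬ δ ∣ m → β m ≡ 0 [ZMOD ((ℓ : ℤ) ^ N)])
    (s t : ℕ) (hs : 0 < s) (ht : 0 < t)
    (a : Fin s → ℕ) (b : Fin t → ℕ)
    (ha : ∀ i, a i ≤ δ - 1) (hb : ∀ j, b j ≤ δ - 1)
    (hsmall : ∀ n : ℕ, n < K →
      (∑ i, lam (δ * n + a i)) ≡ (∑ j, lam (δ * n + b j)) [ZMOD ((ℓ : ℤ) ^ N)]) :
    ∀ n : ℕ, (∑ i, lam (δ * n + a i)) ≡ (∑ j, lam (δ * n + b j)) [ZMOD ((ℓ : ℤ) ^ N)] := by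
  have cast_iff : ∀ x y : ℤ, x ≡ y [ZMOD ((ℓ : ℤ) ^ N)] ↔
      ((x : ZMod (ℓ ^ N)) = (y : ZMod (ℓ ^ N))) := by
    intro x y
    rw [ZMod.intCast_eq_intCast_iff]
    push_cast
    rfl
  set R := ZMod (ℓ ^ N) with hR
  set A : ℕ → R := fun n => ((α n : ℤ) : R) with hA
  set B : ℕ → R := fun n => ((β n : ℤ) : R) with hB
  set D : ℕ → R := fun n => (∑ i, A (δ * n + a i)) - (∑ j, A (δ * n + b j)) with hD
  have hB0 : B 0 = 1 := by
    have := (cast_iff _ _).mp hβ0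
    simpa using this
  have hBz : ∀ m : ℕ, ¬ δ ∣ m → B m = 0 := by
    intro m hm
    have := (cast_iff _ _).mp (hβ m hm)
    simpa using this
  have hAper : ∀ m : ℕ, A (m + δ * K) = A m := fun m => (cast_iff _ _).mp (hper m)
  -- key1
  have key1 : ∀ c : ℕ, c < δ → ∀ n : ℕ,
      ((lam (δ * n + c) : ℤ) : R)
        = ∑ j ∈ Finset.range (n + 1), A (δ * j + c) * B (δ * (n - j)) := by
    intro c hc n
    rw [hlam]
    push_cast
    simp only [R, Int.cast_sum]; simp only [Int.cast_mul]
    have himg : ∑ j ∈ Finset.range (n + 1), A (δ * j + c) * B (δ * (n - j))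
        = ∑ i ∈ (Finset.range (n + 1)).image (fun j => δ * j + c),
            A i * B (δ * n + c - i) := by
      rw [Finset.sum_image (by
        intro x _ y _ h
        exact Nat.eq_of_mul_eq_mul_left hδ (by simp only at h; omega))]
      apply Finset.sum_congr rfl
      intro j hj
      have hj' : j ≤ n := by simpa [Nat.lt_succ_iff] using hj
      have : δ * (n - j) = δ * n + c - (δ * j + c) := by
        obtain ⟨m, rfl⟩ : ∃ m, n = j + m := ⟨n - j, by omega⟩
        have := Nat.mul_add δ j m
        have h2 : j + m - j = m := by omega
        rw [h2]; omega
      rw [this]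
    rw [himg]
    symm
    apply Finset.sum_subset
    · intro i hi
      simp only [Finset.mem_image, Finset.mem_range] at hi ⊢
      obtain ⟨j, hj, rfl⟩ := hi
      have : δ * j ≤ δ * n := Nat.mul_le_mul le_rfl (by omega)
      omega
    · intro i hi hni
      have : B (δ * n + c - i) = 0 := by
        apply hBz
        intro ⟨m, hm⟩
        simp only [Finset.mem_range] at hi
        have h2 : m ≤ n := by
          have e1 : δ * (n + 1) = δ * n + δ * 1 := Nat.mul_add δ n 1
          have h3 : δ * m < δ * (n + 1) := by omega
          exact Nat.lt_succ_iff.mp (Nat.lt_of_mul_lt_mul_left h3)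
        apply hni
        simp only [Finset.mem_image, Finset.mem_range]
        obtain ⟨p, rfl⟩ : ∃ p, n = m + p := ⟨n - m, by omega⟩
        refine ⟨p, by omega, ?_⟩
        have e : δ * (m + p) = δ * m + δ * p := Nat.mul_add δ m p
        omega
      rw [this, mul_zero]
  -- key2
  have key2 : ∀ n : ℕ,
      ((∑ i, lam (δ * n + a i) : ℤ) : R) - ((∑ j, lam (δ * n + b j) : ℤ) : R)
        = ∑ j ∈ Finset.range (n + 1), D j * B (δ * (n - j)) := by
    intro n
    have h1 : ((∑ i, lam (δ * n + a i) : ℤ) : R)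
        = ∑ j ∈ Finset.range (n + 1), (∑ i, A (δ * j + a i)) * B (δ * (n - j)) := by
      push_cast
      simp only [R, Int.cast_sum]
      rw [Finset.sum_congr rfl (fun i _ => key1 (a i) (by have := ha i; omega) n)]
      rw [Finset.sum_comm]
      exact Finset.sum_congr rfl fun j _ => (Finset.sum_mul _ _ _).symm
    have h2 : ((∑ j, lam (δ * n + b j) : ℤ) : R)
        = ∑ j ∈ Finset.range (n + 1), (∑ i, A (δ * j + b i)) * B (δ * (n - j)) := by
      push_cast
      simp only [R, Int.cast_sum]
      rw [Finset.sum_congr rfl (fun i _ => key1 (b i) (by have := hb i; omega) n)]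
      rw [Finset.sum_comm]
      exact Finset.sum_congr rfl fun j _ => (Finset.sum_mul _ _ _).symm
    rw [h1, h2, ← Finset.sum_sub_distrib]
    exact Finset.sum_congr rfl fun j _ => (sub_mul _ _ _).symm
  -- D vanishes for n < K
  have hDsmall : ∀ n, n < K → D n = 0 := by
    intro n
    induction n using Nat.strong_induction_on with
    | _ n ih =>
      intro hn
      have h0 : ∑ j ∈ Finset.range (n + 1), D j * B (δ * (n - j)) = 0 := by
        rw [← key2 n, sub_eq_zero]
        exact (cast_iff _ _).mp (hsmall n hn)
      rw [Finset.sum_range_succ] at h0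
      have hz : ∀ j ∈ Finset.range n, D j * B (δ * (n - j)) = 0 := by
        intro j hj
        have hjn := Finset.mem_range.mp hj
        rw [ih j hjn (lt_trans hjn hn), zero_mul]
      rw [Finset.sum_eq_zero hz, zero_add, Nat.sub_self, Nat.mul_zero, hB0, mul_one] at h0
      exact h0
  -- D is K-periodic
  have hDper : ∀ n, D (n + K) = D n := by
    intro n
    have harg : ∀ c : ℕ, δ * (n + K) + c = (δ * n + c) + δ * K := by
      intro c; rw [Nat.mul_add]; omega
    simp only [hD]
    congr 1
    · exact Finset.sum_congr rfl fun i _ => by rw [harg (a i), hAper]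
    · exact Finset.sum_congr rfl fun j _ => by rw [harg (b j), hAper]
  -- D vanishes everywhere
  have hDall : ∀ n, D n = 0 := by
    intro n
    induction n using Nat.strong_induction_on with
    | _ n ih =>
      by_cases hn : n < K
      · exact hDsmall n hn
      · have : n = (n - K) + K := by omega
        rw [this, hDper]
        exact ih (n - K) (by omega)
  -- conclusion
  intro n
  rw [cast_iff, ← sub_eq_zero, key2]
  exact Finset.sum_eq_zero fun j _ => by rw [hDall, zero_mul]
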